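/- With sin_q(z) = sum_{n≥0} (-1)^n q^(n^2) z^(2n+1)/[2n+1]_q! and cos_q(z) = sum_{n≥0} (-1)^n q^(n^2) z^(2n)/[2n]_q! over Q(q), the coefficient of z^(2n+1) in sin_{1/q}(z)·cos_q(z) equals (-1)^n q^(n(n+1)/2) / [2n+1]_q! · prod_{i=1}^{n} (1+q^i)^2. -/

import Mathlib

noncomputable section
open Finset PowerSeries

abbrev Fq : Type := RatFunc ℚ

/-- The variable `q` as element of the field of rational functions `ℚ(q)`. -/
def qv : Fq := RatFunc.X

/-- The q-integer `[m]_q = 1 + q + ... + q^(m-1)`. -/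
def qInt (x : Fq) (m : ℕ) : Fq := ∑ i ∈ Finset.range m, x ^ i

/-- The q-factorial `[m]_q! = [1]_q [2]_q ⋯ [m]_q`. -/
def qFact (x : Fq) (m : ℕ) : Fq := ∏ i ∈ Finset.range m, qInt x (i + 1)

/-- `sin_q(z) = ∑ (-1)^n q^(n^2) z^(2n+1)/[2n+1]_q!`. -/
def qsin (x : Fq) : PowerSeries Fq :=
  PowerSeries.mk fun m =>
    if m % 2 = 1 then (-1 : Fq) ^ (m / 2) * x ^ ((m / 2) ^ 2) / qFact x m else 0

/-- `cos_q(z) = ∑ (-1)^n q^(n^2) z^(2n)/[2n]_q!`. -/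
def qcos (x : Fq) : PowerSeries Fq :=
  PowerSeries.mk fun m =>
    if m % 2 = 0 then (-1 : Fq) ^ (m / 2) * x ^ ((m / 2) ^ 2) / qFact x m else 0


lemma qv_ne_zero : qv ≠ 0 := RatFunc.X_ne_zero

lemma qInt_qv_eq (m : ℕ) : qInt qv m = algebraMap (Polynomial ℚ) Fq (∑ i ∈ range m, Polynomial.X ^ i) := by
  simp [qInt, qv, map_sum, map_pow, RatFunc.algebraMap_X]

lemma qInt_ne_zero (m : ℕ) (hm : 1 ≤ m) : qInt qv m ≠ 0 := by
  rw [qInt_qv_eq]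
  intro h
  have h2 : (∑ i ∈ range m, (Polynomial.X : Polynomial ℚ) ^ i) = 0 :=
    IsFractionRing.injective (Polynomial ℚ) Fq (by simpa using h)
  have := congrArg (Polynomial.eval 1) h2
  simp [Polynomial.eval_finset_sum] at this
  omega

lemma qFact_ne_zero (m : ℕ) : qFact qv m ≠ 0 := by
  refine Finset.prod_ne_zero_iff.mpr fun i _ => qInt_ne_zero _ (by omega)

lemma qFact_succ (m : ℕ) : qFact qv (m + 1) = qFact qv m * qInt qv (m + 1) := by
  rw [qFact, Finset.prod_range_succ]; rfl

/-- `[a+b]_q = [a]_q + q^a [b]_q`. -/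
lemma qInt_add (a b : ℕ) : qInt qv (a + b) = qInt qv a + qv ^ a * qInt qv b := by
  rw [qInt, Finset.sum_range_add, qInt, qInt, Finset.mul_sum]
  simp [pow_add]

/-- q-binomial coefficient. -/
def qb : ℕ → ℕ → Fq
  | _, 0 => 1
  | 0, _ + 1 => 0
  | m + 1, j + 1 => qb m (j + 1) * qv ^ (j + 1) + qb m j

lemma qb_zero_right (m : ℕ) : qb m 0 = 1 := by cases m <;> rfl

lemma qb_pascalA (m j : ℕ) : qb (m + 1) (j + 1) = qb m (j + 1) * qv ^ (j + 1) + qb m j := rfl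

lemma qb_eq_zero (m j : ℕ) (h : m < j) : qb m j = 0 := by
  induction m generalizing j with
  | zero => cases j with | zero => omega | succ j => rfl
  | succ m ih =>
    cases j with
    | zero => omega
    | succ j => rw [qb_pascalA, ih _ (by omega), ih _ (by omega)]; ring

/-- `qb m j * [j]! * [m-j]! = [m]!` for `j ≤ m`. -/
lemma qb_mul_fact (m : ℕ) : ∀ j, j ≤ m → qb m j * (qFact qv j * qFact qv (m - j)) = qFact qv m := by
  induction m with
  | zero => intro j hj; interval_cases j; simp [qb_zero_right, qFact]
  | succ m ih =>
    intro j hj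
    cases j with
    | zero => simp [qb_zero_right, qFact]
    | succ i =>
      rw [qb_pascalA]
      rcases Nat.lt_or_ge i m with hi | hi
      · -- i + 1 ≤ m
        have h1 := ih (i + 1) (by omega)
        have h2 := ih i (by omega)
        have e1 : m + 1 - (i + 1) = (m - (i + 1)) + 1 := by omega
        have e2 : m - i = (m - (i + 1)) + 1 := by omega
        rw [e1, qFact_succ i, qFact_succ (m - (i+1))]
        have key : qInt qv (i + 1) + qv ^ (i + 1) * qInt qv (m - i) = qInt qv (m + 1) := by
          rw [← qInt_add]; congr 1; omega
        calc (qb m (i + 1) * qv ^ (i + 1) + qb m i) *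
              (qFact qv i * qInt qv (i + 1) * (qFact qv (m - (i + 1)) * qInt qv (m - (i+1) + 1)))
            = (qb m (i + 1) * (qFact qv (i+1) * qFact qv (m - (i+1)))) * (qv ^ (i+1) * qInt qv (m - (i+1) + 1))
              + (qb m i * (qFact qv i * qFact qv (m - i))) * qInt qv (i + 1) := by
              rw [qFact_succ i, e2, qFact_succ (m - (i+1))]; ring
          _ = qFact qv m * (qInt qv (i + 1) + qv ^ (i + 1) * qInt qv (m - (i + 1) + 1)) := by
              rw [h1, h2]; ring
          _ = qFact qv (m + 1) := by
              rw [show m - (i+1) + 1 = m - i by omega, key, qFact_succ]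
      · -- i = m
        have him : i = m := by omega
        subst him
        rw [qb_eq_zero i (i+1) (by omega)]
        have h2 := ih i le_rfl
        rw [Nat.sub_self] at h2
        have hf0 : qFact qv 0 = 1 := by simp [qFact]
        rw [hf0, mul_one] at h2
        have hsub : i + 1 - (i + 1) = 0 := by omega
        rw [hsub, hf0, mul_one, zero_mul, zero_add, qFact_succ, ← mul_assoc, h2]

lemma qInt_mul_sub_one (m : ℕ) : qInt qv m * (qv - 1) = qv ^ m - 1 := geom_sum_mul qv m

lemma qb_absorb (m j : ℕ) (h : j < m) :
    qb m (j + 1) * qInt qv (j + 1) = qb m j * qInt qv (m - j) := by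
  have hne : qFact qv j * qFact qv (m - j - 1) ≠ 0 :=
    mul_ne_zero (qFact_ne_zero _) (qFact_ne_zero _)
  apply mul_right_cancel₀ hne
  have h1 := qb_mul_fact m (j + 1) (by omega)
  have h2 := qb_mul_fact m j (by omega)
  have e1 : m - (j + 1) = m - j - 1 := by omega
  have e2 : m - j = (m - j - 1) + 1 := by omega
  calc qb m (j + 1) * qInt qv (j + 1) * (qFact qv j * qFact qv (m - j - 1))
      = qb m (j + 1) * (qFact qv (j + 1) * qFact qv (m - (j + 1))) := by
        rw [qFact_succ, e1]; ring
    _ = qFact qv m := h1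
    _ = qb m j * (qFact qv j * qFact qv (m - j)) := h2.symm
    _ = qb m j * qInt qv (m - j) * (qFact qv j * qFact qv (m - j - 1)) := by
        rw [e2, qFact_succ, ← e2]; ring

lemma qb_pascalB (m j : ℕ) : qb (m + 1) (j + 1) = qb m (j + 1) + qv ^ (m - j) * qb m j := by
  rcases Nat.lt_or_ge j m with h | h
  · rw [qb_pascalA]
    have habs := qb_absorb m j h
    have hb1 := qInt_mul_sub_one (j + 1)
    have hb2 := qInt_mul_sub_one (m - j)
    linear_combination (qv - 1) * habs - qb m (j + 1) * hb1 + qb m j * hb2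
  · rcases Nat.lt_or_ge m j with h2 | h2
    · rw [qb_pascalA, qb_eq_zero m (j+1) (by omega), qb_eq_zero m j (by omega)]
      ring
    · have : j = m := by omega
      subst this
      rw [qb_pascalA, qb_eq_zero j (j+1) (by omega), Nat.sub_self]
      ring

/-- clean version with explicit decomposition -/
lemma qb_pascalB' (a b : ℕ) : qb (a + b + 1) (b + 1) = qb (a + b) (b + 1) + qv ^ a * qb (a + b) b := by
  have := qb_pascalB (a + b) b
  rwa [Nat.add_sub_cancel] at this

/-- odd sum: coefficient sum for sin_{1/q}·cos_q (up to factors). -/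
def Ff (n : ℕ) : Fq := ∑ k ∈ range (n + 1), qb (2*n+1) (2*k+1) * qv ^ (k*(k+1) + (n-k)^2)
/-- even companion sum. -/
def Gg (n : ℕ) : Fq := ∑ k ∈ range (n + 1), qb (2*n+1) (2*k) * qv ^ (k*(k-1) + (n-k)^2)

/-- remainder in the odd Pascal split -/
def remF (n : ℕ) : ℕ → Fq
  | 0 => 0
  | k + 1 => qv ^ (2*n - 2*k) * qb (2*n+1) (2*k+1)

def remG (n : ℕ) : ℕ → Fq
  | 0 => 0
  | k + 1 => (1 + qv ^ (2*n+2)) * qb (2*n+1) (2*k+1) + qv ^ (2*n+1 - 2*k) * qb (2*n+1) (2*k)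

lemma split_odd (n k : ℕ) (hk : k ≤ n + 1) :
    qb (2*n+3) (2*k+1) =
      qv ^ (2*k+1) * qb (2*n+1) (2*k+1) + (1 + qv ^ (2*n+2)) * qb (2*n+1) (2*k) + remF n k := by
  match k with
  | 0 =>
    have hA : qb (2*n+3) 1 = qb (2*n+2) 1 * qv ^ 1 + qb (2*n+2) 0 := qb_pascalA (2*n+2) 0
    have hB : qb (2*n+2) 1 = qb (2*n+1) 1 + qv ^ (2*n+1) * qb (2*n+1) 0 := by
      have := qb_pascalB' (2*n+1) 0
      simpa using this
    rw [remF, hA, hB, qb_zero_right, qb_zero_right]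
    ring
  | k + 1 =>
    rcases Nat.lt_or_ge k n with hkn | hkn
    · -- general case: n = k + 1 + d
      obtain ⟨d, rfl⟩ : ∃ d, n = k + 1 + d := ⟨n - k - 1, by omega⟩
      have hA := qb_pascalA (2*(k+1+d)+2) (2*k+2)
      rw [show 2*(k+1+d)+2+1 = 2*(k+1+d)+3 by omega] at hA
      have hB1 := qb_pascalB' (2*d+1) (2*k+2)
      rw [show 2*d+1+(2*k+2)+1 = 2*(k+1+d)+2 by omega,
        show 2*d+1+(2*k+2) = 2*(k+1+d)+1 by omega] at hB1
      have hB2 := qb_pascalB' (2*d+2) (2*k+1)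
      rw [show 2*d+2+(2*k+1)+1 = 2*(k+1+d)+2 by omega,
        show 2*d+2+(2*k+1) = 2*(k+1+d)+1 by omega] at hB2
      rw [remF, show 2*(k+1+d) - 2*k = 2*d+2 by omega,
        show 2*(k+1)+1 = 2*k+2+1 by omega, hA, hB1, hB2]
      ring
    · -- k ≥ n, with k+1 ≤ n+1 forces k = n
      have : k = n := by omega
      subst this
      have h1 : qb (2*k+3) (2*(k+1)+1) = qb (2*k+2) (2*k+2) := by
        have := qb_pascalA (2*k+2) (2*k+2)
        rw [show 2*(k+1)+1 = 2*k+2+1 by omega, this, qb_eq_zero (2*k+2) (2*k+3) (by omega)]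
        ring
      have h2 : qb (2*k+2) (2*k+2) = qb (2*k+1) (2*k+1) := by
        have := qb_pascalA (2*k+1) (2*k+1)
        rw [this, qb_eq_zero (2*k+1) (2*k+2) (by omega)]
        ring
      rw [show 2*k+3 = 2*k+3 from rfl, h1, h2, remF]
      rw [qb_eq_zero (2*k+1) (2*(k+1)+1) (by omega), qb_eq_zero (2*k+1) (2*(k+1)) (by omega),
        show 2*k - 2*k = 0 by omega]
      ring

lemma split_even (n k : ℕ) (hk : k ≤ n + 1) :
    qb (2*n+3) (2*k) = qv ^ (2*k) * qb (2*n+1) (2*k) + remG n k := by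
  match k with
  | 0 => rw [remG, qb_zero_right, qb_zero_right]; ring
  | k + 1 =>
    obtain ⟨d, rfl⟩ : ∃ d, n = k + d := ⟨n - k, by omega⟩
    have hB := qb_pascalB' (2*d+1) (2*k+1)
    rw [show 2*d+1+(2*k+1)+1 = 2*(k+d)+3 by omega,
      show 2*d+1+(2*k+1) = 2*(k+d)+2 by omega] at hB
    have hA1 := qb_pascalA (2*(k+d)+1) (2*k+1)
    rw [show 2*(k+d)+1+1 = 2*(k+d)+2 by omega] at hA1
    have hA2 := qb_pascalA (2*(k+d)+1) (2*k)
    rw [show 2*(k+d)+1+1 = 2*(k+d)+2 by omega] at hA2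
    rw [show 2*(k+1) = 2*k+1+1 by omega, remG, hB, hA1, hA2,
      show 2*(k+d)+1 - 2*k = 2*d+1 by omega]
    ring

lemma Ff_succ (n : ℕ) :
    Ff (n+1) = 2 * qv ^ (2*n+2) * Ff n + (qv ^ (2*n+1) + qv ^ (4*n+3)) * Gg n := by
  have hexp : ∀ k ∈ range (n+2),
      qb (2*(n+1)+1) (2*k+1) * qv ^ (k*(k+1) + (n+1-k)^2) =
      qv ^ (2*k+1) * qb (2*n+1) (2*k+1) * qv ^ (k*(k+1) + (n+1-k)^2)
        + (1 + qv ^ (2*n+2)) * qb (2*n+1) (2*k) * qv ^ (k*(k+1) + (n+1-k)^2)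
        + remF n k * qv ^ (k*(k+1) + (n+1-k)^2) := by
    intro k hk
    rw [show 2*(n+1)+1 = 2*n+3 by omega, split_odd n k (by simp at hk; omega)]
    ring
  rw [Ff, Finset.sum_congr rfl hexp, Finset.sum_add_distrib, Finset.sum_add_distrib]
  -- S1
  have hS1 : ∑ k ∈ range (n+2), qv ^ (2*k+1) * qb (2*n+1) (2*k+1) * qv ^ (k*(k+1) + (n+1-k)^2)
      = qv ^ (2*n+2) * Ff n := by
    rw [Finset.sum_range_succ, qb_eq_zero (2*n+1) (2*(n+1)+1) (by omega), Ff, Finset.mul_sum]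
    simp only [mul_zero, zero_mul, add_zero]
    refine Finset.sum_congr rfl fun k hk => ?_
    simp only [Finset.mem_range] at hk
    obtain ⟨d, rfl⟩ : ∃ d, n = k + d := ⟨n - k, by omega⟩
    rw [show k+d+1-k = d+1 by omega, show k+d-k = d by omega]
    ring
  -- S2
  have hS2 : ∑ k ∈ range (n+2), (1 + qv ^ (2*n+2)) * qb (2*n+1) (2*k) * qv ^ (k*(k+1) + (n+1-k)^2)
      = (1 + qv ^ (2*n+2)) * qv ^ (2*n+1) * Gg n := by
    rw [Finset.sum_range_succ, qb_eq_zero (2*n+1) (2*(n+1)) (by omega), Gg, Finset.mul_sum]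
    simp only [mul_zero, zero_mul, add_zero]
    refine Finset.sum_congr rfl fun k hk => ?_
    simp only [Finset.mem_range] at hk
    obtain ⟨d, rfl⟩ : ∃ d, n = k + d := ⟨n - k, by omega⟩
    rw [show k+d+1-k = d+1 by omega, show k+d-k = d by omega]
    cases k with
    | zero => simp; ring
    | succ k => rw [show k+1-1 = k by omega]; ring
  -- S3
  have hS3 : ∑ k ∈ range (n+2), remF n k * qv ^ (k*(k+1) + (n+1-k)^2)
      = qv ^ (2*n+2) * Ff n := by
    rw [Finset.sum_range_succ', remF]
    rw [zero_mul, add_zero, Ff, Finset.mul_sum]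
    refine Finset.sum_congr rfl fun k hk => ?_
    simp only [Finset.mem_range] at hk
    rw [remF]
    obtain ⟨d, rfl⟩ : ∃ d, n = k + d := ⟨n - k, by omega⟩
    rw [show 2*(k+d) - 2*k = 2*d by omega, show k+d+1-(k+1) = d by omega, show k+d-k = d by omega]
    ring
  rw [hS1, hS2, hS3]
  ring

lemma Gg_succ (n : ℕ) :
    Gg (n+1) = (1 + qv ^ (2*n+2)) * Ff n + 2 * qv ^ (2*n+1) * Gg n := by
  have hexp : ∀ k ∈ range (n+2),
      qb (2*(n+1)+1) (2*k) * qv ^ (k*(k-1) + (n+1-k)^2) =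
      qv ^ (2*k) * qb (2*n+1) (2*k) * qv ^ (k*(k-1) + (n+1-k)^2)
        + remG n k * qv ^ (k*(k-1) + (n+1-k)^2) := by
    intro k hk
    rw [show 2*(n+1)+1 = 2*n+3 by omega, split_even n k (by simp at hk; omega)]
    ring
  rw [Gg, Finset.sum_congr rfl hexp, Finset.sum_add_distrib]
  have hT1 : ∑ k ∈ range (n+2), qv ^ (2*k) * qb (2*n+1) (2*k) * qv ^ (k*(k-1) + (n+1-k)^2)
      = qv ^ (2*n+1) * Gg n := by
    rw [Finset.sum_range_succ, qb_eq_zero (2*n+1) (2*(n+1)) (by omega), Gg, Finset.mul_sum]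
    simp only [mul_zero, zero_mul, add_zero]
    refine Finset.sum_congr rfl fun k hk => ?_
    simp only [Finset.mem_range] at hk
    obtain ⟨d, rfl⟩ : ∃ d, n = k + d := ⟨n - k, by omega⟩
    rw [show k+d+1-k = d+1 by omega, show k+d-k = d by omega]
    cases k with
    | zero => simp; ring
    | succ k => rw [show k+1-1 = k by omega]; ring
  have hT2 : ∑ k ∈ range (n+2), remG n k * qv ^ (k*(k-1) + (n+1-k)^2)
      = (1 + qv ^ (2*n+2)) * Ff n + qv ^ (2*n+1) * Gg n := by
    rw [Finset.sum_range_succ', remG, zero_mul, add_zero]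
    have : ∀ k ∈ range (n+1), remG n (k+1) * qv ^ ((k+1)*((k+1)-1) + (n+1-(k+1))^2)
        = (1 + qv ^ (2*n+2)) * (qb (2*n+1) (2*k+1) * qv ^ (k*(k+1) + (n-k)^2))
          + qv ^ (2*n+1) * (qb (2*n+1) (2*k) * qv ^ (k*(k-1) + (n-k)^2)) := by
      intro k hk
      simp only [Finset.mem_range] at hk
      rw [remG]
      obtain ⟨d, rfl⟩ : ∃ d, n = k + d := ⟨n - k, by omega⟩
      rw [show 2*(k+d)+1 - 2*k = 2*d+1 by omega, show (k+1)-1 = k by omega,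
        show k+d+1-(k+1) = d by omega, show k+d-k = d by omega]
      cases k with
      | zero => simp; ring
      | succ k => rw [show k+1-1 = k by omega]; ring
    rw [Finset.sum_congr rfl this, Finset.sum_add_distrib, Ff, Gg, Finset.mul_sum, Finset.mul_sum]
  rw [hT1, hT2]
  ring

def Pp (n : ℕ) : Fq := ∏ i ∈ Finset.Icc 1 n, (1 + qv ^ i) ^ 2

lemma Pp_succ (n : ℕ) : Pp (n+1) = Pp n * (1 + qv ^ (n+1)) ^ 2 := by
  rw [Pp, Pp, ← Finset.prod_Icc_succ_top (by omega : 1 ≤ n + 1)]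

lemma FG_closed (n : ℕ) :
    Ff n = qv ^ (n*(n+1)/2) * Pp n ∧ Gg n = qv ^ (n*(n-1)/2) * Pp n := by
  induction n with
  | zero =>
    constructor
    · rw [Ff]
      simp [qb_pascalA, qb_zero_right, qb_eq_zero 0 1 (by omega), Pp]
    · rw [Gg]
      simp [qb_zero_right, Pp]
  | succ n ih =>
    obtain ⟨hF, hG⟩ := ih
    obtain ⟨s, h1, h2, h4, h5⟩ : ∃ s, n*(n-1)/2 = s ∧ n*(n+1)/2 = s + n
        ∧ (n+1)*((n+1)-1)/2 = s + n ∧ (n+1)*((n+1)+1)/2 = s + 2*n + 1 := by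
      have e1 : n*(n+1) = n*(n-1) + 2*n := by cases n with
        | zero => simp
        | succ m => simp [Nat.succ_sub_one]; ring
      have e2 : (n+1)*((n+1)+1) = n*(n-1) + 4*n + 2 := by cases n with
        | zero => simp
        | succ m => simp [Nat.succ_sub_one]; ring
      have e3 : (n+1)*((n+1)-1) = n*(n-1) + 2*n := by cases n with
        | zero => simp
        | succ m => simp [Nat.succ_sub_one]; ring
      have e4 : n*(n-1) % 2 = 0 := by
        cases n with
        | zero => simp
        | succ m =>
          have h := Nat.even_mul_succ_self m
          have : (m+1)*(m+1-1) = m*(m+1) := by simp [Nat.succ_sub_one]; ring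
          rw [this, Nat.even_iff] at *
          exact h
      refine ⟨n*(n-1)/2, rfl, by omega, by omega, by omega⟩
    constructor
    · rw [Ff_succ, hF, hG, h1, h2, h5, Pp_succ]
      ring
    · rw [Gg_succ, hF, hG, h1, h2, h4, Pp_succ]
      ring

lemma qInt_inv (i : ℕ) : qInt qv⁻¹ (i + 1) * qv ^ i = qInt qv (i + 1) := by
  rw [qInt, qInt, Finset.sum_mul, ← Finset.sum_range_reflect (fun j => qv ^ j) (i + 1)]
  refine Finset.sum_congr rfl fun j hj => ?_
  simp only [Finset.mem_range] at hj
  rw [show i + 1 - 1 - j = i - j by omega]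
  obtain ⟨d, rfl⟩ : ∃ d, i = j + d := ⟨i - j, by omega⟩
  rw [inv_pow, pow_add, show j + d - j = d by omega, ← mul_assoc,
    inv_mul_cancel₀ (pow_ne_zero _ qv_ne_zero), one_mul]

lemma qFact_inv (m : ℕ) : qFact qv⁻¹ m * qv ^ (∑ i ∈ range m, i) = qFact qv m := by
  rw [qFact, qFact, ← Finset.prod_pow_eq_pow_sum, ← Finset.prod_mul_distrib]
  exact Finset.prod_congr rfl fun i _ => qInt_inv i

lemma qFact_inv_odd (k : ℕ) : qFact qv⁻¹ (2*k+1) * qv ^ (k*(2*k+1)) = qFact qv (2*k+1) := by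
  have h := qFact_inv (2*k+1)
  have h2 := Finset.sum_range_id_mul_two (2*k+1)
  have e : (2*k+1) * (2*k+1-1) = 2*(k*(2*k+1)) := by
    rw [show 2*k+1-1 = 2*k by omega]; ring
  rw [show ∑ i ∈ range (2*k+1), i = k*(2*k+1) by omega] at h
  exact h

lemma sum_even_zero (f : ℕ → Fq) (m : ℕ) (h : ∀ k, f (2*k) = 0) :
    ∑ i ∈ range (2*m), f i = ∑ k ∈ range m, f (2*k+1) := by
  induction m with
  | zero => simp
  | succ m ih =>
    rw [show 2*(m+1) = 2*m+1+1 by omega, Finset.sum_range_succ, Finset.sum_range_succ, ih,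
      h, add_zero, Finset.sum_range_succ]


theorem coeff_sin_inv_q_mul_cos_q (n : ℕ) :
    PowerSeries.coeff (R := Fq) (2 * n + 1) (qsin qv⁻¹ * qcos qv) =
      (-1 : Fq) ^ n * qv ^ (n * (n + 1) / 2) / qFact qv (2 * n + 1) *
        ∏ i ∈ Finset.Icc 1 n, (1 + qv ^ i) ^ 2 := by
  rw [PowerSeries.coeff_mul, Finset.Nat.sum_antidiagonal_eq_sum_range_succ_mk]
  rw [show (2*n+1).succ = 2*(n+1) by omega]
  have hz : ∀ k, (PowerSeries.coeff (R := Fq) (2*k)) (qsin qv⁻¹) * (PowerSeries.coeff (R := Fq) (2*n+1-(2*k))) (qcos qv) = 0 := by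
    intro k
    have h0 : (PowerSeries.coeff (R := Fq) (2*k)) (qsin qv⁻¹) = 0 := by
      simp [qsin, coeff_mk, Nat.mul_mod_right]
    rw [h0, zero_mul]
  rw [sum_even_zero (fun i => (PowerSeries.coeff (R := Fq) i) (qsin qv⁻¹) * (PowerSeries.coeff (R := Fq) (2*n+1-i)) (qcos qv)) (n+1) hz]
  have hterm : ∀ k ∈ range (n+1),
      (PowerSeries.coeff (R := Fq) (2*k+1)) (qsin qv⁻¹) * (PowerSeries.coeff (R := Fq) (2*n+1-(2*k+1))) (qcos qv)
      = (-1:Fq)^n * (qFact qv (2*n+1))⁻¹ * (qb (2*n+1) (2*k+1) * qv ^ (k*(k+1)+(n-k)^2)) := by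
    intro k hk
    simp only [Finset.mem_range] at hk
    obtain ⟨d, rfl⟩ : ∃ d, n = k + d := ⟨n - k, by omega⟩
    rw [show 2*(k+d)+1-(2*k+1) = 2*d by omega, show k+d-k = d by omega]
    simp only [qsin, qcos, coeff_mk]
    rw [if_pos (by omega : (2*k+1) % 2 = 1), if_pos (by omega : (2*d) % 2 = 0),
      show (2*k+1)/2 = k by omega, show (2*d)/2 = d by omega]
    have hA : qFact qv⁻¹ (2*k+1) = qFact qv (2*k+1) / qv ^ (k*(2*k+1)) := by
      rw [eq_div_iff (pow_ne_zero _ qv_ne_zero)]; exact qFact_inv_odd k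
    have hqb := qb_mul_fact (2*(k+d)+1) (2*k+1) (by omega)
    rw [show 2*(k+d)+1 - (2*k+1) = 2*d by omega] at hqb
    rw [hA, inv_pow]
    have h1 := qFact_ne_zero (2*k+1)
    have h2 := qFact_ne_zero (2*d)
    have h3 := qFact_ne_zero (2*(k+d)+1)
    have h4 : qv ≠ 0 := qv_ne_zero
    field_simp
    rw [← hqb]
    ring
  rw [Finset.sum_congr rfl hterm, ← Finset.mul_sum]
  have hF := (FG_closed n).1
  rw [show (∑ k ∈ range (n+1), qb (2*n+1) (2*k+1) * qv ^ (k*(k+1)+(n-k)^2)) = Ff n from rfl, hF]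
  rw [Pp, div_eq_mul_inv] at *
  ring
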